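/- Let g_1 = 1 and g_{j+1} = 1 - exp(-g_j). For any j ≥ 1, any real λ with 0 ≤ λ ≤ n, and positive integer n: the sum over i from 0 to n of C(n,i) (λ/n)^i (1-λ/n)^{n-i} exp(-i g_j) is at most exp(-λ g_{j+1}). -/

import Mathlib

theorem binomial_exp_moment_upper (n : ℕ) (hn : 0 < n) (lam : ℝ)
    (hlam0 : 0 ≤ lam) (hlamn : lam ≤ n)
    (g : ℕ → ℝ) (hg1 : g 1 = 1)
    (hgrec : ∀ k ≥ 1, g (k + 1) = 1 - Real.exp (-(g k)))
    (j : ℕ) (hj : 1 ≤ j) :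
    ∑ i ∈ Finset.range (n + 1),
      (n.choose i : ℝ) * (lam / n) ^ i * (1 - lam / n) ^ (n - i) *
        Real.exp (-(i : ℝ) * g j)
      ≤ Real.exp (-lam * g (j + 1)) := by
  have hn' : (0:ℝ) < n := by exact_mod_cast hn
  set p : ℝ := lam / n with hp
  have hp0 : 0 ≤ p := div_nonneg hlam0 hn'.le
  have hp1 : p ≤ 1 := (div_le_one hn').mpr hlamn
  have hrec := hgrec j hj
  have key : ∑ i ∈ Finset.range (n + 1),
      (n.choose i : ℝ) * p ^ i * (1 - p) ^ (n - i) * Real.exp (-(i : ℝ) * g j)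
      = (p * Real.exp (-(g j)) + (1 - p)) ^ n := by
    rw [add_pow]
    apply Finset.sum_congr rfl
    intro i _
    have : Real.exp (-(i : ℝ) * g j) = Real.exp (-(g j)) ^ i := by
      rw [← Real.exp_nat_mul]; ring_nf
    rw [this, mul_pow]; ring
  rw [key]
  have ha : p * Real.exp (-(g j)) + (1 - p) = 1 + (-(p * g (j + 1))) := by
    rw [hrec]; ring
  have ha0 : 0 ≤ p * Real.exp (-(g j)) + (1 - p) := by
    have := Real.exp_pos (-(g j))
    nlinarith
  have hle : p * Real.exp (-(g j)) + (1 - p) ≤ Real.exp (-(p * g (j + 1))) := by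
    rw [ha]; linarith [Real.add_one_le_exp (-(p * g (j + 1)))]
  calc (p * Real.exp (-(g j)) + (1 - p)) ^ n
      ≤ Real.exp (-(p * g (j + 1))) ^ n := pow_le_pow_left₀ ha0 hle n
    _ = Real.exp (-lam * g (j + 1)) := by
        rw [← Real.exp_nat_mul]
        congr 1
        rw [hp]
        field_simp [hp]
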